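/- arXiv:1308.3036 — 9 statements merged into one kernel-verified Lean document; each statement's English description precedes it below -/
import Mathlib

section
/- A semidirect product of a completely simple semigroup T by a group H is completely simple. -/
/-- Semidirect product multiplication on `T × H`: `(t,A)(u,B) = (t · (A·u), AB)`. -/
def sdMul {T H : Type*} [Mul T] [Mul H] (act : H → T → T) (x y : T × H) : T × H :=
  (x.1 * act x.2 y.1, x.2 * y.2)

/-- A (two-sided) ideal of the semigroup with multiplication `mul`. -/
def IsIdeal {S : Type*} (mul : S → S → S) (I : Set S) : Prop :=
  I.Nonempty ∧ ∀ a ∈ I, ∀ s : S, mul a s ∈ I ∧ mul s a ∈ I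

/-- A semigroup is simple if it has no proper two-sided ideals. -/
def IsSimpleSgr {S : Type*} (mul : S → S → S) : Prop :=
  ∀ I : Set S, IsIdeal mul I → I = Set.univ

/-- A primitive idempotent: an idempotent minimal in the natural order on idempotents. -/
def IsPrimitiveIdem {S : Type*} (mul : S → S → S) (e : S) : Prop :=
  mul e e = e ∧ ∀ f : S, mul f f = f → mul e f = f → mul f e = f → f = e

/-- A semigroup is completely simple if it is simple and has a primitive idempotent. -/
def IsCompletelySimple {S : Type*} (mul : S → S → S) : Prop :=
  IsSimpleSgr mul ∧ ∃ e : S, IsPrimitiveIdem mul e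

/-- A semidirect product of a completely simple semigroup by a group is completely simple. -/
theorem stmt_3 {T H : Type*} [Semigroup T] [Group H] (act : H → T → T)
    (h_one : ∀ t : T, act 1 t = t)
    (h_comp : ∀ (A B : H) (t : T), act (B * A) t = act B (act A t))
    (h_mul : ∀ (A : H) (t u : T), act A (t * u) = act A t * act A u)
    (hT : IsCompletelySimple (fun a b : T => a * b)) :
    IsCompletelySimple (sdMul act) := by
  obtain ⟨hsimp, e, he, hprim⟩ := hT
  have hinv : ∀ (A : H) (y : T), act A (act A⁻¹ y) = y := by
    intro A y
    rw [← h_comp A⁻¹ A, mul_inv_cancel, h_one]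
  constructor
  · rintro I ⟨⟨⟨t, A⟩, htA⟩, hclosed⟩
    have key : ∀ u : T, ∃ x y, x * t * y = u := by
      have hid : IsIdeal (fun a b : T => a * b) {u | ∃ x y, x * t * y = u} := by
        refine ⟨⟨t * t * t, t, t, rfl⟩, ?_⟩
        rintro a ⟨x, y, rfl⟩ s
        exact ⟨⟨x, y * s, by simp [mul_assoc]⟩, ⟨s * x, y, by simp [mul_assoc]⟩⟩
      have := hsimp _ hid
      intro u
      have hu : u ∈ {u | ∃ x y, x * t * y = u} := this ▸ Set.mem_univ u
      exact hu
    ext ⟨u, B⟩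
    simp only [Set.mem_univ, iff_true]
    obtain ⟨x, y, hxy⟩ := key u
    have h1 : sdMul act (x, 1) (t, A) ∈ I := (hclosed _ htA (x, 1)).2
    have h2 : sdMul act (sdMul act (x, 1) (t, A)) (act A⁻¹ y, A⁻¹ * B) ∈ I :=
      (hclosed _ h1 (act A⁻¹ y, A⁻¹ * B)).1
    have heq : sdMul act (sdMul act (x, 1) (t, A)) (act A⁻¹ y, A⁻¹ * B) = (u, B) := by
      simp only [sdMul, h_one, one_mul]
      rw [hinv, hxy, mul_inv_cancel_left]
    rwa [heq] at h2
  · refine ⟨(e, 1), ?_, ?_⟩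
    · simp [sdMul, IsPrimitiveIdem, h_one, he]
    · rintro ⟨f, A⟩ hff hef hfe
      simp only [sdMul, h_one, Prod.mk.injEq] at hff hef hfe
      have hA : A = 1 := by
        have := hff.2
        have : A * A = A * 1 := by simpa using this
        exact mul_left_cancel this
      subst hA
      rw [h_one] at hff hfe
      have hf : f = e := hprim f hff.1 hef.1 hfe.1
      simp [hf]
end

section
/- Let T ⋊ H be a semidirect product of a regular semigroup T by a group H. Then for any elements (t,A), (u,B) of T ⋊ H: (t,A) R (u,B) in T ⋊ H if and only if t R u in T, where R denotes Green's R-relation. -/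
/-- The principal right ideal `x ∪ xS` generated by `x`. -/
def rIdeal {S : Type*} (mul : S → S → S) (x : S) : Set S :=
  insert x {y | ∃ s : S, y = mul x s}

/-- Green's relation `R`: `x R y` iff `x ∪ xS = y ∪ yS`. -/
def greenR {S : Type*} (mul : S → S → S) (x y : S) : Prop :=
  rIdeal mul x = rIdeal mul y

/-- For a regular, associative multiplication, `greenR` is mutual right divisibility. -/
lemma greenR_iff_div {S : Type*} (mul : S → S → S)
    (hassoc : ∀ a b c, mul (mul a b) c = mul a (mul b c))
    (hreg : ∀ x, ∃ x', mul (mul x x') x = x) (x y : S) :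
    greenR mul x y ↔ (∃ s, y = mul x s) ∧ (∃ s, x = mul y s) := by
  have hId : ∀ z, rIdeal mul z = {w | ∃ s, w = mul z s} := by
    intro z
    obtain ⟨z', hz⟩ := hreg z
    ext w
    simp only [rIdeal, Set.mem_insert_iff, Set.mem_setOf_eq]
    constructor
    · rintro (h | h)
      · exact ⟨mul z' z, by rw [h, ← hassoc, hz]⟩
      · exact h
    · exact Or.inr
  constructor
  · intro h
    unfold greenR at h
    constructor
    · have : y ∈ rIdeal mul x := h ▸ Set.mem_insert _ _
      rw [hId] at this; exact this
    · have : x ∈ rIdeal mul y := h ▸ Set.mem_insert _ _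
      rw [hId] at this; exact this
  · rintro ⟨⟨s, hs⟩, ⟨r, hr⟩⟩
    unfold greenR
    rw [hId, hId]
    ext w
    simp only [Set.mem_setOf_eq]
    constructor
    · rintro ⟨a, rfl⟩
      exact ⟨mul r a, by rw [← hassoc, ← hr]⟩
    · rintro ⟨a, rfl⟩
      exact ⟨mul s a, by rw [← hassoc, ← hs]⟩

/-- In a semidirect product of a regular semigroup `T` by a group `H`,
`(t,A) R (u,B)` holds if and only if `t R u` holds in `T`. -/
theorem stmt_4 {T H : Type*} [Semigroup T] [Group H] (act : H → T → T)
    (h_one : ∀ t : T, act 1 t = t)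
    (h_comp : ∀ (A B : H) (t : T), act (B * A) t = act B (act A t))
    (h_mul : ∀ (A : H) (t u : T), act A (t * u) = act A t * act A u)
    (hreg : ∀ t : T, ∃ t' : T, t * t' * t = t)
    (t u : T) (A B : H) :
    greenR (sdMul act) (t, A) (u, B) ↔ greenR (fun a b : T => a * b) t u := by
  have hinv : ∀ (C : H) (s : T), act C (act C⁻¹ s) = s := by
    intro C s
    rw [← h_comp, mul_inv_cancel, h_one]
  have hassocP : ∀ a b c : T × H, sdMul act (sdMul act a b) c = sdMul act a (sdMul act b c) := by
    rintro ⟨a, Aa⟩ ⟨b, Bb⟩ ⟨c, Cc⟩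
    simp only [sdMul, Prod.mk.injEq, mul_assoc, h_mul, h_comp]

  have hregP : ∀ x : T × H, ∃ x', sdMul act (sdMul act x x') x = x := by
    rintro ⟨a, Aa⟩
    obtain ⟨a', ha⟩ := hreg a
    refine ⟨(act Aa⁻¹ a', Aa⁻¹), ?_⟩
    simp only [sdMul, hinv, Prod.mk.injEq]
    rw [mul_inv_cancel, h_one]
    exact ⟨ha, one_mul Aa⟩
  rw [greenR_iff_div _ hassocP hregP,
      greenR_iff_div _ (fun a b c => mul_assoc a b c) (fun x => hreg x)]
  constructor
  · rintro ⟨⟨⟨s, C⟩, hs⟩, ⟨⟨r, D⟩, hr⟩⟩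
    simp only [sdMul, Prod.mk.injEq] at hs hr
    exact ⟨⟨act A s, hs.1⟩, ⟨act B r, hr.1⟩⟩
  · rintro ⟨⟨s, hs⟩, ⟨r, hr⟩⟩
    refine ⟨⟨(act A⁻¹ s, A⁻¹ * B), ?_⟩, ⟨(act B⁻¹ r, B⁻¹ * A), ?_⟩⟩ <;>
      simp only [sdMul, hinv, Prod.mk.injEq] <;> constructor
    · exact hs
    · group
    · exact hr
    · group
end

section
/- Let T ⋊ H be a semidirect product of a regular semigroup T by a group H. Then for any elements (t,A), (u,B) of T ⋊ H: (t,A) L (u,B) in T ⋊ H if and only if A⁻¹·t is L-related to B⁻¹·u in T, where L denotes Green's L-relation. -/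
/-- The principal left ideal `x ∪ Sx` generated by `x`. -/
def lIdeal {S : Type*} (mul : S → S → S) (x : S) : Set S :=
  insert x {y | ∃ s : S, y = mul s x}

/-- Green's relation `L`: `x L y` iff `x ∪ Sx = y ∪ Sy`. -/
def greenL {S : Type*} (mul : S → S → S) (x y : S) : Prop :=
  lIdeal mul x = lIdeal mul y

theorem green_iff_aux {S : Type*} (mul : S → S → S)
    (assoc : ∀ a b c, mul (mul a b) c = mul a (mul b c))
    {x y : S} (hx : ∃ s, x = mul s x) (hy : ∃ s, y = mul s y) :
    greenL mul x y ↔ (∃ s, x = mul s y) ∧ (∃ s, y = mul s x) := by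
  constructor
  · intro h
    constructor
    · have hxy : x ∈ lIdeal mul y := by rw [← h]; exact Set.mem_insert _ _
      rcases Set.mem_insert_iff.mp hxy with rfl | ⟨s, hs⟩
      · exact hy
      · exact ⟨s, hs⟩
    · have hyx : y ∈ lIdeal mul x := by rw [h]; exact Set.mem_insert _ _
      rcases Set.mem_insert_iff.mp hyx with rfl | ⟨s, hs⟩
      · exact hx
      · exact ⟨s, hs⟩
  · rintro ⟨⟨s, hs⟩, ⟨r, hr⟩⟩
    apply Set.eq_of_subset_of_subset
    · intro z hz
      rcases Set.mem_insert_iff.mp hz with rfl | ⟨w, rfl⟩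
      · exact Or.inr ⟨s, hs⟩
      · exact Or.inr ⟨mul w s, by rw [assoc, ← hs]⟩
    · intro z hz
      rcases Set.mem_insert_iff.mp hz with rfl | ⟨w, rfl⟩
      · exact Or.inr ⟨r, hr⟩
      · exact Or.inr ⟨mul w r, by rw [assoc, ← hr]⟩

/-- In a semidirect product of a regular semigroup `T` by a group `H`,
`(t,A) L (u,B)` holds if and only if `A⁻¹·t L B⁻¹·u` holds in `T`. -/
theorem stmt_5 {T H : Type*} [Semigroup T] [Group H] (act : H → T → T)
    (h_one : ∀ t : T, act 1 t = t)
    (h_comp : ∀ (A B : H) (t : T), act (B * A) t = act B (act A t))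
    (h_mul : ∀ (A : H) (t u : T), act A (t * u) = act A t * act A u)
    (hreg : ∀ t : T, ∃ t' : T, t * t' * t = t)
    (t u : T) (A B : H) :
    greenL (sdMul act) (t, A) (u, B) ↔
      greenL (fun a b : T => a * b) (act A⁻¹ t) (act B⁻¹ u) := by
  -- act C (act C⁻¹ v) = v and act C⁻¹ (act C v) = v
  have cancel : ∀ (C : H) (v : T), act C (act C⁻¹ v) = v := by
    intro C v
    rw [← h_comp, mul_inv_cancel, h_one]
  have cancel' : ∀ (C : H) (v : T), act C⁻¹ (act C v) = v := by
    intro C v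
    rw [← h_comp, inv_mul_cancel, h_one]
  -- regularity of semidirect product elements: ∃ s, x = s * x
  have sd_reg : ∀ (v : T) (C : H), ∃ s, (v, C) = sdMul act s (v, C) := by
    intro v C
    obtain ⟨v', hv'⟩ := hreg v
    refine ⟨(v * v', 1), ?_⟩
    simp only [sdMul, h_one, one_mul]
    rw [hv']
  have t_reg : ∀ (v : T), ∃ s, v = s * v := by
    intro v
    obtain ⟨v', hv'⟩ := hreg v
    exact ⟨v * v', hv'.symm⟩
  rw [green_iff_aux (sdMul act) (fun a b c => by
        simp only [sdMul, h_mul, h_comp, mul_assoc]) (sd_reg t A) (sd_reg u B),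
      green_iff_aux (fun a b : T => a * b) (fun a b c => mul_assoc a b c)
        (t_reg _) (t_reg _)]
  have key : ∀ (v w : T) (C D : H),
      (∃ s, (v, C) = sdMul act s (w, D)) ↔ (∃ s, act C⁻¹ v = s * act D⁻¹ w) := by
    intro v w C D
    constructor
    · rintro ⟨⟨s, E⟩, hs⟩
      simp only [sdMul, Prod.mk.injEq] at hs
      obtain ⟨hv, hE⟩ := hs
      refine ⟨act C⁻¹ s, ?_⟩
      rw [hv, h_mul]
      congr 1
      rw [← h_comp]
      subst hE
      congr 1
      group
    · rintro ⟨s, hs⟩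
      refine ⟨(act C s, C * D⁻¹), ?_⟩
      simp only [sdMul, Prod.mk.injEq]
      constructor
      · have := congrArg (act C) hs
        rw [cancel, h_mul] at this
        rw [this]
        congr 1
        rw [← h_comp]
      · group
  rw [key t u A B, key u t B A]
end

section
/- Let S = M[G; I, Λ; P] be a Rees matrix semigroup over a group G with normalized sandwich matrix P. Then every group congruence ρ on S arises from a normal subgroup N of G containing all entries of P, via (i,g,λ) ρ (j,h,μ) if and only if gh⁻¹ ∈ N. -/
/-- Rees matrix semigroup multiplication on `I × G × Λ` with sandwich matrix `P`. -/
def reesMul {G I L : Type*} [Mul G] (P : L → I → G) (x y : I × G × L) : I × G × L :=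
  (x.1, x.2.1 * P x.2.2 y.1 * y.2.1, y.2.2)

/-- Every group congruence on a Rees matrix semigroup `S = M[G;I,Λ;P]` with `P`
normalized arises from a normal subgroup `N` of `G` containing all entries of `P`,
via `(i,g,λ) ρ (j,h,μ) ↔ g h⁻¹ ∈ N`.  (A group congruence is presented here by a
surjective multiplicative map `φ` of `S` onto a group `K`; `ρ` is its kernel.) -/
theorem stmt_7 {G I L K : Type*} [Group G] [Group K] (P : L → I → G) (i0 : I) (l0 : L)
    (hnorm : (∀ i : I, P l0 i = 1) ∧ (∀ l : L, P l i0 = 1))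
    (φ : I × G × L → K)
    (hsurj : Function.Surjective φ)
    (hhom : ∀ x y : I × G × L, φ (reesMul P x y) = φ x * φ y) :
    ∃ N : Subgroup G, N.Normal ∧ (∀ (l : L) (i : I), P l i ∈ N) ∧
      ∀ x y : I × G × L, φ x = φ y ↔ x.2.1 * y.2.1⁻¹ ∈ N := by
  obtain ⟨h1, h2⟩ := hnorm
  -- the idempotent
  have he : φ (i0, 1, l0) = 1 := by
    have := hhom (i0, 1, l0) (i0, 1, l0)
    simp [reesMul, h1] at this
    exact this
  -- reduction: φ x depends only on the middle coordinate
  have hredL : ∀ (i : I) (g : G) (l : L), φ (i, g, l) = φ (i0, g, l) := by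
    intro i g l
    have := hhom (i0, 1, l0) (i, g, l)
    simp [reesMul, h1, he] at this
    exact this.symm
  have hredR : ∀ (i : I) (g : G) (l : L), φ (i, g, l) = φ (i, g, l0) := by
    intro i g l
    have := hhom (i, g, l) (i0, 1, l0)
    simp [reesMul, h2, he] at this
    exact this.symm
  have hred : ∀ x : I × G × L, φ x = φ (i0, x.2.1, l0) := by
    rintro ⟨i, g, l⟩
    rw [hredR, hredL]
  -- ψ as a monoid hom
  have hmul : ∀ g h : G, φ (i0, g * h, l0) = φ (i0, g, l0) * φ (i0, h, l0) := by
    intro g h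
    have := hhom (i0, g, l0) (i0, h, l0)
    simpa [reesMul, h1] using this
  let ψ : G →* K := { toFun := fun g => φ (i0, g, l0), map_one' := he, map_mul' := hmul }
  refine ⟨ψ.ker, inferInstance, ?_, ?_⟩
  · intro l i
    have := hhom (i0, 1, l) (i, 1, l0)
    simp [reesMul, h2] at this
    have h' : φ (i0, 1, l) = 1 := by rw [hredR]; exact he
    have h'' : φ (i, 1, l0) = 1 := by rw [hredL]; exact he
    have : φ (i0, P l i, l0) = 1 := by rw [this, h', h'', mul_one]
    exact this
  · intro x y
    rw [hred x, hred y]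
    have key : φ (i0, x.2.1, l0) = φ (i0, y.2.1, l0) ↔ ψ (x.2.1 * y.2.1⁻¹) = 1 := by
      constructor
      · intro h
        show φ (i0, x.2.1 * y.2.1⁻¹, l0) = 1
        rw [hmul, h, ← hmul, mul_inv_cancel, he]
      · intro h
        have : ψ x.2.1 = ψ (x.2.1 * y.2.1⁻¹) * ψ y.2.1 := by
          rw [← ψ.map_mul, inv_mul_cancel_right]
        rw [h, one_mul] at this
        exact this
    exact key.trans (by simp [MonoidHom.mem_ker])
end

section
/- The kernel of any group congruence on a completely simple semigroup is a completely simple subsemigroup. -/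
/-- A (two-sided) ideal of the subsemigroup `K` of the semigroup with multiplication `mul`. -/
def IsIdealOn {S : Type*} (mul : S → S → S) (K I : Set S) : Prop :=
  I ⊆ K ∧ I.Nonempty ∧ ∀ a ∈ I, ∀ s ∈ K, mul a s ∈ I ∧ mul s a ∈ I

/-- The subsemigroup `K` is simple: it has no proper two-sided ideals. -/
def IsSimpleOn {S : Type*} (mul : S → S → S) (K : Set S) : Prop :=
  ∀ I : Set S, IsIdealOn mul K I → I = K

/-- `e` is a primitive idempotent of the subsemigroup `K`. -/
def IsPrimitiveIdemOn {S : Type*} (mul : S → S → S) (K : Set S) (e : S) : Prop :=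
  e ∈ K ∧ mul e e = e ∧
    ∀ f ∈ K, mul f f = f → mul e f = f → mul f e = f → f = e

/-- The subset `K` is a completely simple subsemigroup: closed under multiplication,
simple, and possessing a primitive idempotent. -/
def IsCompletelySimpleOn {S : Type*} (mul : S → S → S) (K : Set S) : Prop :=
  (∀ a ∈ K, ∀ b ∈ K, mul a b ∈ K) ∧ IsSimpleOn mul K ∧
    ∃ e : S, IsPrimitiveIdemOn mul K e

/-- The kernel of any group congruence on a completely simple semigroup is a
completely simple subsemigroup.  (The group congruence is presented by a surjective
multiplicative map `φ` of `S` onto a group `K`; its kernel is `{x | φ x = 1}`.) -/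
theorem stmt_8 {S K : Type*} [Semigroup S] [Group K]
    (hS : IsCompletelySimpleOn (fun a b : S => a * b) Set.univ)
    (φ : S → K) (hsurj : Function.Surjective φ)
    (hhom : ∀ x y : S, φ (x * y) = φ x * φ y) :
    IsCompletelySimpleOn (fun a b : S => a * b) {x : S | φ x = 1} := by
  obtain ⟨hcl, hsimple, e, heU, hee, hprim⟩ := hS
  have hee : e * e = e := hee
  have heE : ∀ X : S, e * (e * X) = e * X := fun X => by rw [← mul_assoc, hee]
  -- the idempotent maps to 1
  have hphie : φ e = 1 := by
    have h : φ e = φ e * φ e := by rw [← hhom, hee]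
    exact (left_eq_mul.mp h)
  -- simplicity of S: S x S = S for every x
  have htrans : ∀ x y : S, ∃ s t : S, s * (x * t) = y := by
    intro x y
    have hJ : IsIdealOn (fun a b : S => a * b) Set.univ {z | ∃ s t : S, s * (x * t) = z} := by
      refine ⟨Set.subset_univ _, ⟨x * (x * x), x, x, rfl⟩, ?_⟩
      rintro a ⟨s, t, rfl⟩ u -
      refine ⟨⟨s, t * u, ?_⟩, ⟨u * s, t, ?_⟩⟩ <;> simp only [mul_assoc]
    have hJu := hsimple _ hJ
    have hy : y ∈ {z | ∃ s t : S, s * (x * t) = z} := by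
      rw [hJu]; exact Set.mem_univ y
    exact hy
  -- eSe is a group: every e*(x*e) has a two-sided inverse relative to e
  have hinv : ∀ x : S, ∃ y : S,
      (e * (x * e)) * y = e ∧ y * (e * (x * e)) = e ∧ e * y = y ∧ y * e = y := by
    intro x
    obtain ⟨p, q, hpq⟩ := htrans (e * (x * e)) e
    have h1 : (e * (p * e)) * ((e * (x * e)) * (e * (q * e))) = e := by
      have step : (e * (p * e)) * ((e * (x * e)) * (e * (q * e)))
          = (e * (p * ((e * (x * e)) * q))) * e := by
        simp only [mul_assoc, heE]
      rw [step, hpq, hee, hee]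
    -- right inverse: f = z * (q' * p') is an idempotent fixed by e, hence equals e
    have hff : ((e * (x * e)) * ((e * (q * e)) * (e * (p * e))))
        * ((e * (x * e)) * ((e * (q * e)) * (e * (p * e))))
        = (e * (x * e)) * ((e * (q * e)) * (e * (p * e))) := by
      have step : ((e * (x * e)) * ((e * (q * e)) * (e * (p * e))))
          * ((e * (x * e)) * ((e * (q * e)) * (e * (p * e))))
          = (e * (x * e)) * ((e * (q * e)) *
              (((e * (p * e)) * ((e * (x * e)) * (e * (q * e)))) * (e * (p * e)))) := by
        simp only [mul_assoc]
      rw [step, h1]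
      simp only [mul_assoc, heE]
    have hef : e * ((e * (x * e)) * ((e * (q * e)) * (e * (p * e))))
        = (e * (x * e)) * ((e * (q * e)) * (e * (p * e))) := by
      simp only [mul_assoc, heE]
    have hfe : ((e * (x * e)) * ((e * (q * e)) * (e * (p * e)))) * e
        = (e * (x * e)) * ((e * (q * e)) * (e * (p * e))) := by
      simp only [mul_assoc, heE, hee]
    have hf : (e * (x * e)) * ((e * (q * e)) * (e * (p * e))) = e :=
      hprim _ (Set.mem_univ _) hff hef hfe
    -- left inverse: g = (q' * p') * z is an idempotent fixed by e, hence equals e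
    have hgg : (((e * (q * e)) * (e * (p * e))) * (e * (x * e)))
        * (((e * (q * e)) * (e * (p * e))) * (e * (x * e)))
        = ((e * (q * e)) * (e * (p * e))) * (e * (x * e)) := by
      have step : (((e * (q * e)) * (e * (p * e))) * (e * (x * e)))
          * (((e * (q * e)) * (e * (p * e))) * (e * (x * e)))
          = (e * (q * e)) * (((e * (p * e)) * ((e * (x * e)) * (e * (q * e))))
              * ((e * (p * e)) * (e * (x * e)))) := by
        simp only [mul_assoc]
      rw [step, h1]
      simp only [mul_assoc, heE]
    have heg : e * (((e * (q * e)) * (e * (p * e))) * (e * (x * e)))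
        = ((e * (q * e)) * (e * (p * e))) * (e * (x * e)) := by
      simp only [mul_assoc, heE]
    have hge : (((e * (q * e)) * (e * (p * e))) * (e * (x * e))) * e
        = ((e * (q * e)) * (e * (p * e))) * (e * (x * e)) := by
      simp only [mul_assoc, heE, hee]
    have hg : ((e * (q * e)) * (e * (p * e))) * (e * (x * e)) = e :=
      hprim _ (Set.mem_univ _) hgg heg hge
    refine ⟨(e * (q * e)) * (e * (p * e)), hf, hg, ?_, ?_⟩
    · simp only [mul_assoc, heE]
    · simp only [mul_assoc, heE, hee]
  -- now assemble the three parts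
  refine ⟨?_, ?_, ?_⟩
  · -- closure
    intro a ha b hb
    have ha' : φ a = 1 := ha
    have hb' : φ b = 1 := hb
    show φ (a * b) = 1
    rw [hhom, ha', hb', one_mul]
  · -- simplicity of the kernel
    intro I hI
    obtain ⟨hIsub, ⟨a, haI⟩, hIcl⟩ := hI
    have haN : φ a = 1 := hIsub haI
    refine Set.Subset.antisymm hIsub ?_
    intro n hn
    have hn' : φ n = 1 := hn
    -- Step A: e ∈ I
    obtain ⟨y, hzy, hyz, hey, hye⟩ := hinv a
    have hphiz : φ (e * (a * e)) = 1 := by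
      rw [hhom, hhom, hphie, haN, one_mul, one_mul]
    have hphiy : φ y = 1 := by
      have h := congrArg φ hzy
      rw [hhom, hphiz, hphie, one_mul] at h
      exact h
    have h5 : (y * a) * e = e := by
      calc (y * a) * e = y * (a * e) := mul_assoc _ _ _
        _ = (y * e) * (a * e) := by rw [hye]
        _ = y * (e * (a * e)) := by simp only [mul_assoc]
        _ = e := hyz
    have hyaI : y * a ∈ I := (hIcl a haI y hphiy).2
    have hyaeI : (y * a) * e ∈ I := (hIcl (y * a) hyaI e hphie).1
    have heI : e ∈ I := h5 ▸ hyaeI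
    -- Step B: n ∈ I
    obtain ⟨u, v, huv⟩ := htrans e n
    obtain ⟨s, hs⟩ := hsurj (φ u)
    obtain ⟨w, hww, hwww, hew, hwe⟩ := hinv s
    have hphizs : φ (e * (s * e)) = φ u := by
      rw [hhom, hhom, hphie, hs, one_mul, mul_one]
    have hmul : φ u * φ w = 1 := by
      have h := congrArg φ hww
      rw [hhom, hphizs, hphie] at h
      exact h
    have hpN : φ (u * w) = 1 := by rw [hhom]; exact hmul
    have huvN : φ u * φ v = 1 := by
      have h := congrArg φ huv
      rw [hhom, hhom, hphie, one_mul, hn'] at h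
      exact h
    have hqN : φ ((e * (s * e)) * v) = 1 := by
      rw [hhom, hphizs]; exact huvN
    have hnE : ((u * w) * e) * ((e * (s * e)) * v) = n := by
      calc ((u * w) * e) * ((e * (s * e)) * v)
          = u * ((w * e) * ((e * (s * e)) * v)) := by simp only [mul_assoc]
        _ = u * (w * ((e * (s * e)) * v)) := by rw [hwe]
        _ = u * ((w * (e * (s * e))) * v) := by simp only [mul_assoc]
        _ = u * (e * v) := by rw [hwww]
        _ = n := huv
    have hpeI : (u * w) * e ∈ I := (hIcl e heI (u * w) hpN).2
    have hfinal : ((u * w) * e) * ((e * (s * e)) * v) ∈ I :=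
      (hIcl ((u * w) * e) hpeI ((e * (s * e)) * v) hqN).1
    exact hnE ▸ hfinal
  · -- primitive idempotent
    exact ⟨e, hphie, hee, fun f _ h1 h2 h3 => hprim f (Set.mem_univ f) h1 h2 h3⟩
end

section
/- Let S be a regular semigroup and ρ a group congruence on S such that Ker ρ is a completely simple subsemigroup of S. Then S is completely simple. -/
/-- If `S` is a regular semigroup with a group congruence (presented by a surjective
multiplicative map `φ` onto a group `K`) whose kernel `{x | φ x = 1}` is a completely
simple subsemigroup, then `S` itself is completely simple. -/
theorem stmt_9 {S K : Type*} [Semigroup S] [Group K]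
    (hreg : ∀ x : S, ∃ x' : S, x * x' * x = x)
    (φ : S → K) (hsurj : Function.Surjective φ)
    (hhom : ∀ x y : S, φ (x * y) = φ x * φ y)
    (hker : IsCompletelySimpleOn (fun a b : S => a * b) {x : S | φ x = 1}) :
    IsCompletelySimpleOn (fun a b : S => a * b) (Set.univ : Set S) := by
  obtain ⟨hclo, hsimp, e, heK, hee, heprim⟩ := hker
  -- key: inverses map to kernel
  have hinv : ∀ x x' : S, x * x' * x = x → φ (x * x') = 1 := by
    intro x x' h
    have h1 : φ (x * x') * φ x = 1 * φ x := by
      rw [one_mul, ← hhom]; exact congrArg φ h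
    exact mul_right_cancel h1
  refine ⟨fun a _ b _ => trivial, ?_, ?_⟩
  · intro I ⟨_, ⟨a, haI⟩, habs⟩
    -- kernel ⊆ I
    have hKI : {x : S | φ x = 1} ⊆ I := by
      have hJ : I ∩ {x : S | φ x = 1} = {x : S | φ x = 1} := by
        apply hsimp
        refine ⟨Set.inter_subset_right, ?_, ?_⟩
        · obtain ⟨a', ha'⟩ := hreg a
          exact ⟨a * a', (habs a haI a' trivial).1, hinv a a' ha'⟩
        · rintro b ⟨hbI, hbK⟩ s hsK
          refine ⟨⟨(habs b hbI s trivial).1, ?_⟩, ⟨(habs b hbI s trivial).2, ?_⟩⟩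
          · show φ (b * s) = 1
            rw [hhom, hbK, hsK, one_mul]
          · show φ (s * b) = 1
            rw [hhom, hbK, hsK, one_mul]
      intro x hx
      exact (hJ ▸ hx : x ∈ I ∩ _).1
    ext s
    simp only [Set.mem_univ, iff_true]
    obtain ⟨s', hs'⟩ := hreg s
    have : s * s' ∈ I := hKI (hinv s s' hs')
    have := (habs _ this s trivial).1
    simpa [hs'] using this
  · refine ⟨e, trivial, hee, ?_⟩
    intro f _ hff hef hfe
    have hfK : φ f = 1 := by
      have : φ f * φ f = 1 * φ f := by
        rw [one_mul, ← hhom]; exact congrArg φ hff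
      exact mul_right_cancel this
    exact heprim f hfK hff hef hfe
end

section
/- (Kaloujnine–Krasner) Let G be a group with normal subgroup N and let H = G/N. Choose a transversal (r_A)_{A∈H} of the cosets of N in G with r_N = 1. Then the map κ : G → N^H ⋊ H = N ≀ H defined by g ↦ (f_g, gN), where f_g : H → N is given by A ↦ r_A g r_{A·gN}⁻¹, is an injective group homomorphism. -/
/-- The wreath-product action of `A ∈ H` on a function `f : H → T`: `B(A·f) = (BA)f`. -/
def wAct {H T : Type*} [Mul H] (A : H) (f : H → T) : H → T :=
  fun B => f (B * A)

/-- The Kaloujnine–Krasner map `f_g : H → G`, `A ↦ r_A g r_{A·gN}⁻¹`, for a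
transversal `r` of the cosets of `N` in `G`. -/
def kkMap {G : Type*} [Group G] (N : Subgroup G) [N.Normal]
    (r : G ⧸ N → G) (g : G) : G ⧸ N → G :=
  fun A => r A * g * (r (A * (g : G ⧸ N)))⁻¹

/-- Kaloujnine–Krasner: for a group `G` with normal subgroup `N`, `H = G/N`, and a
transversal `(r_A)` with `r_N = 1`, the map `κ : g ↦ (f_g, gN)` into `N^H ⋊ H = N ≀ H`
is an injective group homomorphism.  (Here `f_g` takes values in `N`, as asserted.) -/
theorem stmt_11 {G : Type*} [Group G] (N : Subgroup G) [N.Normal]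
    (r : G ⧸ N → G) (hr : ∀ A : G ⧸ N, (r A : G ⧸ N) = A) (hr1 : r 1 = 1) :
    (∀ (g : G) (A : G ⧸ N), kkMap N r g A ∈ N) ∧
    Function.Injective (fun g : G => ((kkMap N r g, (g : G ⧸ N)) : (G ⧸ N → G) × (G ⧸ N))) ∧
    (∀ g h : G,
      ((kkMap N r (g * h), ((g * h : G) : G ⧸ N)) : (G ⧸ N → G) × (G ⧸ N)) =
        sdMul wAct (kkMap N r g, (g : G ⧸ N)) (kkMap N r h, (h : G ⧸ N))) := by
  refine ⟨?_, ?_, ?_⟩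
  · intro g A
    rw [← QuotientGroup.eq_one_iff]
    simp only [kkMap, QuotientGroup.mk_mul, QuotientGroup.mk_inv, hr]
    group
  · intro g h hgh
    simp only [Prod.mk.injEq] at hgh
    obtain ⟨hf, hq⟩ := hgh
    have := congrFun hf 1
    simp only [kkMap, hr1, one_mul, hq] at this
    exact mul_right_cancel this
  · intro g h
    simp only [Prod.mk.injEq, sdMul, wAct]
    constructor
    · funext A
      simp only [kkMap, Pi.mul_apply, wAct, QuotientGroup.mk_mul, ← mul_assoc]
      group
    · simp
end

section
/- With the notation of the Kaloujnine–Krasner embedding: for all g, h ∈ G, the identity f_{gh} = f_g · (gN · f_h) holds in N^H, where gN · f_h denotes the wreath-product action of gN ∈ H on f_h ∈ N^H. -/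
/-- With the notation of the Kaloujnine–Krasner embedding:
`f_{gh} = f_g · (gN · f_h)` in `N^H` (pointwise multiplication, wreath action). -/
theorem stmt_12 {G : Type*} [Group G] (N : Subgroup G) [N.Normal]
    (r : G ⧸ N → G) (hr : ∀ A : G ⧸ N, (r A : G ⧸ N) = A) (hr1 : r 1 = 1)
    (g h : G) :
    kkMap N r (g * h) = kkMap N r g * wAct ((g : G ⧸ N)) (kkMap N r h) := by
  funext A
  simp only [kkMap, wAct, Pi.mul_apply]
  have : ((g * h : G) : G ⧸ N) = (g : G ⧸ N) * (h : G ⧸ N) := by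
    simp [QuotientGroup.mk_mul]
  rw [this, ← mul_assoc]
  group
end

section
/- Let G = Z₇ ⋊ [2̄] be the nonabelian group of order 21, where [2̄] = {1̄, 2̄, 4̄} is the subgroup of the units of Z₇ generated by 2̄ acting on Z₇ by multiplication; let N = Z₇ × {1̄} ≅ Z₇, H = G/N ≅ [2̄]. Let S = M[G; {1,2}, {1,2}; P] with p₁₁ = p₁₂ = p₂₁ = (0̄,1̄) and p₂₂ = (1̄,1̄). Then S is a completely simple semigroup which is an extension of U = M[N; {1,2}, {1,2}; P] by H, but there is no injective semigroup homomorphism from S into the wreath product U ≀ H. -/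
/-- Rees matrix multiplication on `I × G × Λ` with explicit multiplication on `G`. -/
def reesMulM {G I L : Type*} (mulG : G → G → G) (P : L → I → G)
    (x y : I × G × L) : I × G × L :=
  (x.1, mulG (mulG x.2.1 (P x.2.2 y.1)) y.2.1, y.2.2)

/-- The unit `2̄` of `ZMod 7`. -/
def u2 : (ZMod 7)ˣ := ZMod.unitOfCoprime 2 (by decide)

/-- `[2̄] = {1̄, 2̄, 4̄}`, the subgroup of the units of `ZMod 7` generated by `2̄`. -/
def K : Subgroup (ZMod 7)ˣ := Subgroup.zpowers u2

/-- The nonabelian group `G = Z₇ ⋊ [2̄]` of order 21 (as a carrier set). -/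
abbrev G21 : Type := ZMod 7 × K

/-- Multiplication of `G = Z₇ ⋊ [2̄]`: `(a,k)(b,l) = (a + k·b, kl)`. -/
def gMul (x y : G21) : G21 :=
  (x.1 + ((x.2 : (ZMod 7)ˣ) : ZMod 7) * y.1, x.2 * y.2)

/-- The sandwich matrix `P` with `p₁₁ = p₁₂ = p₂₁ = (0̄,1̄)` and `p₂₂ = (1̄,1̄)`
(indices written `0,1`); all entries lie in `N = Z₇ × {1̄}`. -/
def P17 (l i : Fin 2) : G21 :=
  ((if l = 1 ∧ i = 1 then 1 else 0 : ZMod 7), 1)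

/-- `N = Z₇ × {1̄} ≅ Z₇`, the kernel of the second projection of `G`, as a carrier. -/
abbrev Ng : Type := {g : G21 // g.2 = 1}

/-- Multiplication of `N` induced from `G`. -/
def nMul (a b : Ng) : Ng :=
  ⟨gMul a.1 b.1, by
    show (a.1.2 * b.1.2 : K) = 1
    rw [a.2, b.2, mul_one]⟩

/-- The sandwich matrix `P` viewed as a matrix over `N`, so `U = M[N; I, Λ; P]`. -/
def PN (l i : Fin 2) : Ng := ⟨P17 l i, rfl⟩

/-- The carrier of `S = M[G; {1,2}, {1,2}; P]`. -/
abbrev S17 : Type := Fin 2 × G21 × Fin 2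

/-- The carrier of `U = M[N; {1,2}, {1,2}; P]`. -/
abbrev U17 : Type := Fin 2 × Ng × Fin 2

-- auxiliary

instance : DecidableEq K := inferInstance
instance : DecidableEq Ng := inferInstance
instance : DecidableEq U17 := inferInstance

def gOne : G21 := ((0 : ZMod 7), (1 : K))
def ginv (g : G21) : G21 :=
  (-(((g.2⁻¹ : K) : (ZMod 7)ˣ) : ZMod 7) * g.1, g.2⁻¹)

lemma gMul_one (g : G21) : gMul g gOne = g := by
  simp [gMul, gOne]

lemma one_gMul (g : G21) : gMul gOne g = g := by
  simp [gMul, gOne]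

lemma ginv_gMul (g : G21) : gMul (ginv g) g = gOne := by
  simp [gMul, ginv, gOne]

lemma gMul_assoc (x y z : G21) : gMul (gMul x y) z = gMul x (gMul y z) := by
  simp only [gMul, Prod.mk.injEq]
  constructor
  · push_cast
    ring
  · rw [mul_assoc]

def mS : S17 → S17 → S17 := reesMulM gMul P17
def mU : U17 → U17 → U17 := reesMulM nMul PN

def lift (i : Fin 2) (a : ZMod 7) (l : Fin 2) : U17 := (i, ⟨(a, 1), rfl⟩, l)
def idemU (i l : Fin 2) : U17 := lift i (-(P17 l i).1) l

theorem u17_eta (u : U17) : u = lift u.1 u.2.1.1.1 u.2.2 := by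
  obtain ⟨i, ⟨⟨a, k⟩, hk⟩, l⟩ := u
  have hk' : k = 1 := hk
  subst hk'
  rfl

theorem classify : ∀ (i : Fin 2) (a : ZMod 7) (l : Fin 2),
    mU (lift i a l) (lift i a l) = lift i a l → lift i a l = idemU i l := by decide

theorem KL : ∀ (i1 l1 i2 l2 i3 l3 i4 l4 ti tl : Fin 2) (ta : ZMod 7),
    mU (idemU i1 l1) (lift ti ta tl) = lift ti ta tl →
    mU (lift ti ta tl) (idemU i3 l3) = lift ti ta tl →
    mU (lift ti ta tl) (mU (idemU i3 l3) (mU (idemU i4 l4) (idemU i3 l3))) =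
      mU (mU (idemU i1 l1) (mU (idemU i2 l2) (idemU i1 l1)))
        (mU (mU (idemU i1 l1) (mU (idemU i2 l2) (idemU i1 l1))) (lift ti ta tl)) →
    mU (idemU i1 l1) (mU (idemU i2 l2) (idemU i1 l1)) = idemU i1 l1 := by decide

theorem KL2 (E F E' F' T : U17) (hE : mU E E = E) (hF : mU F F = F)
    (hE' : mU E' E' = E') (hF' : mU F' F' = F')
    (h1 : mU E T = T) (h2 : mU T E' = T)
    (h3 : mU T (mU E' (mU F' E')) =
      mU (mU E (mU F E)) (mU (mU E (mU F E)) T)) :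
    mU E (mU F E) = E := by
  have cE : E = idemU E.1 E.2.2 := by
    rw [u17_eta E] at hE
    conv_lhs => rw [u17_eta E]
    exact classify _ _ _ hE
  have cF : F = idemU F.1 F.2.2 := by
    rw [u17_eta F] at hF
    conv_lhs => rw [u17_eta F]
    exact classify _ _ _ hF
  have cE' : E' = idemU E'.1 E'.2.2 := by
    rw [u17_eta E'] at hE'
    conv_lhs => rw [u17_eta E']
    exact classify _ _ _ hE'
  have cF' : F' = idemU F'.1 F'.2.2 := by
    rw [u17_eta F'] at hF'
    conv_lhs => rw [u17_eta F']
    exact classify _ _ _ hF'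
  rw [cE] at h1
  rw [cE, cF] at h3 ⊢
  rw [cE'] at h2 h3
  rw [cF'] at h3
  rw [u17_eta T] at h1 h2 h3
  exact KL _ _ _ _ _ _ _ _ _ _ _ h1 h2 h3

-- elements of S
def se0 : S17 := ((0 : Fin 2), gOne, (0 : Fin 2))
def se1 : S17 := ((1 : Fin 2), ((-1 : ZMod 7), (1 : K)), (1 : Fin 2))
def u2K : K := ⟨u2, Subgroup.mem_zpowers u2⟩
def st : S17 := ((0 : Fin 2), ((0 : ZMod 7), u2K), (0 : Fin 2))
def sz : S17 := mS se0 (mS se1 se0)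

lemma hse0 : mS se0 se0 = se0 := by decide
lemma hse1 : mS se1 se1 = se1 := by decide
lemma hse0t : mS se0 st = st := by decide
lemma hste0 : mS st se0 = st := by decide
lemma hmainS : mS st sz = mS sz (mS sz st) := by decide
lemma hz_ne : sz ≠ se0 := by decide

lemma hP1 : ∀ l : Fin 2, P17 l 0 = gOne := by decide
lemma hP2 : ∀ i : Fin 2, P17 0 i = gOne := by decide

lemma gcancel (w g : G21) : gMul (gMul w (ginv g)) g = w := by
  rw [gMul_assoc, ginv_gMul, gMul_one]

theorem no_embed :
    ¬ ∃ ψ : S17 → (K → U17) × K, Function.Injective ψ ∧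
        ∀ x y : S17, ψ (reesMulM gMul P17 x y) =
          ((fun C => reesMulM nMul PN ((ψ x).1 C) ((ψ y).1 (C * (ψ x).2))),
            (ψ x).2 * (ψ y).2) := by
  rintro ⟨ψ, hinj, hhom⟩
  have hp2 : ∀ x y, (ψ (mS x y)).2 = (ψ x).2 * (ψ y).2 :=
    fun x y => congrArg Prod.snd (hhom x y)
  have hf : ∀ x y C, (ψ (mS x y)).1 C = mU ((ψ x).1 C) ((ψ y).1 (C * (ψ x).2)) :=
    fun x y C => congrFun (congrArg Prod.fst (hhom x y)) C
  have pe0 : (ψ se0).2 = 1 := by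
    have h := hp2 se0 se0
    rw [hse0] at h
    exact left_eq_mul.mp h
  have pe1 : (ψ se1).2 = 1 := by
    have h := hp2 se1 se1
    rw [hse1] at h
    exact left_eq_mul.mp h
  have pz : (ψ sz).2 = 1 := by
    have h := hp2 se0 (mS se1 se0)
    have h2 := hp2 se1 se0
    rw [h2, pe0, pe1, one_mul, one_mul] at h
    exact h
  have hE : ∀ C, mU ((ψ se0).1 C) ((ψ se0).1 C) = (ψ se0).1 C := by
    intro C
    have h := hf se0 se0 C
    rw [hse0, pe0, mul_one] at h
    exact h.symm
  have hF : ∀ C, mU ((ψ se1).1 C) ((ψ se1).1 C) = (ψ se1).1 C := by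
    intro C
    have h := hf se1 se1 C
    rw [hse1, pe1, mul_one] at h
    exact h.symm
  have hET : ∀ C, mU ((ψ se0).1 C) ((ψ st).1 C) = (ψ st).1 C := by
    intro C
    have h := hf se0 st C
    rw [hse0t, pe0, mul_one] at h
    exact h.symm
  have hTE : ∀ C, mU ((ψ st).1 C) ((ψ se0).1 (C * (ψ st).2)) = (ψ st).1 C := by
    intro C
    have h := hf st se0 C
    rw [hste0] at h
    exact h.symm
  have hZ : ∀ C, (ψ sz).1 C = mU ((ψ se0).1 C) (mU ((ψ se1).1 C) ((ψ se0).1 C)) := by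
    intro C
    have h1 := hf se0 (mS se1 se0) C
    have h2 := hf se1 se0 C
    rw [pe0, mul_one] at h1
    rw [pe1, mul_one] at h2
    rw [h2] at h1
    exact h1
  have hMain : ∀ C, mU ((ψ st).1 C) ((ψ sz).1 (C * (ψ st).2)) =
      mU ((ψ sz).1 C) (mU ((ψ sz).1 C) ((ψ st).1 C)) := by
    intro C
    have h1 := hf st sz C
    have h2 := hf sz (mS sz st) C
    have h3 := hf sz st C
    rw [pz, mul_one] at h2 h3
    rw [hmainS] at h1
    rw [h3] at h2
    exact h1.symm.trans h2
  have hfinal : ∀ C, (ψ sz).1 C = (ψ se0).1 C := by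
    intro C
    have hgoal := hMain C
    rw [hZ C, hZ (C * (ψ st).2)] at hgoal
    have := KL2 ((ψ se0).1 C) ((ψ se1).1 C) ((ψ se0).1 (C * (ψ st).2))
      ((ψ se1).1 (C * (ψ st).2)) ((ψ st).1 C) (hE C) (hF C) (hE (C * (ψ st).2))
      (hF (C * (ψ st).2)) (hET C) (hTE C) hgoal
    rw [hZ C]
    exact this
  have heq : ψ sz = ψ se0 := by
    apply Prod.ext
    · funext C; exact hfinal C
    · rw [pz, pe0]
  exact hz_ne (hinj heq)

theorem simpleS : IsSimpleSgr (reesMulM gMul P17) := by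
  intro I hI
  obtain ⟨⟨a, ha⟩, hid⟩ := hI
  apply Set.eq_univ_iff_forall.mpr
  intro x
  have key : x = mS (x.1, gMul x.2.1 (ginv a.2.1), (0 : Fin 2))
      (mS a ((0 : Fin 2), gOne, x.2.2)) := by
    show x = (x.1, gMul (gMul (gMul x.2.1 (ginv a.2.1)) (P17 0 a.1))
      (gMul (gMul a.2.1 (P17 a.2.2 0)) gOne), x.2.2)
    rw [hP1, hP2, gMul_one, gMul_one, gMul_one, gcancel]
  rw [key]
  exact (hid _ ((hid a ha _).1) _).2

theorem primS : IsPrimitiveIdem (reesMulM gMul P17) se0 := by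
  constructor
  · decide
  · intro f hff hef hfe
    obtain ⟨i, g, l⟩ := f
    have hi : (0 : Fin 2) = i := congrArg Prod.fst hef
    have hl : (0 : Fin 2) = l := congrArg (fun y : S17 => y.2.2) hfe
    subst hi; subst hl
    have hgg : gMul (gMul g (P17 0 0)) g = g := congrArg (fun y : S17 => y.2.1) hff
    rw [hP2, gMul_one] at hgg
    have h2 : gMul (ginv g) (gMul g g) = gMul (ginv g) g := by rw [hgg]
    rw [← gMul_assoc, ginv_gMul, one_gMul] at h2
    show ((0 : Fin 2), g, (0 : Fin 2)) = se0
    rw [h2]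
    rfl

theorem part2 :
    Function.Surjective (fun x : S17 => (x.2.1.2 : K)) ∧
      (∀ x y : S17, (reesMulM gMul P17 x y).2.1.2 = x.2.1.2 * y.2.1.2) ∧
      Function.Injective (fun u : U17 => ((u.1, u.2.1.1, u.2.2) : S17)) ∧
      (∀ u v : U17,
        ((reesMulM nMul PN u v).1, (reesMulM nMul PN u v).2.1.1,
          (reesMulM nMul PN u v).2.2) =
        reesMulM gMul P17 (u.1, u.2.1.1, u.2.2) (v.1, v.2.1.1, v.2.2)) ∧
      Set.range (fun u : U17 => ((u.1, u.2.1.1, u.2.2) : S17)) =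
        {x : S17 | x.2.1.2 = 1} := by
  refine ⟨?_, ?_, ?_, ?_, ?_⟩
  · intro k
    exact ⟨((0 : Fin 2), ((0 : ZMod 7), k), (0 : Fin 2)), rfl⟩
  · intro x y
    show (x.2.1.2 * (P17 x.2.2 y.1).2) * y.2.1.2 = x.2.1.2 * y.2.1.2
    rw [show (P17 x.2.2 y.1).2 = 1 from rfl, mul_one]
  · intro u v h
    simp only [Prod.mk.injEq] at h
    exact Prod.ext h.1 (Prod.ext (Subtype.ext h.2.1) h.2.2)
  · intro u v
    rfl
  · ext x
    simp only [Set.mem_range, Set.mem_setOf_eq]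
    constructor
    · rintro ⟨u, rfl⟩
      exact u.2.1.2
    · intro hx
      exact ⟨(x.1, ⟨x.2.1, hx⟩, x.2.2), rfl⟩

/-- `S = M[G;{1,2},{1,2};P]`, with `G = Z₇ ⋊ [2̄]` of order 21, `N = Z₇ × {1̄}`,
`H = G/N ≅ [2̄]`, `p₁₁ = p₁₂ = p₂₁ = (0̄,1̄)`, `p₂₂ = (1̄,1̄)`, is a completely simple
semigroup; it is an extension of `U = M[N;{1,2},{1,2};P]` by `H` (the second projection
`φ` onto `H = [2̄]` is a surjective homomorphism whose kernel is a copy of `U`); yet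
there is no injective semigroup homomorphism of `S` into the wreath product
`U ≀ H = U^H ⋊ H`. -/
theorem stmt_17 :
    IsCompletelySimple (reesMulM gMul P17) ∧
    (Function.Surjective (fun x : S17 => (x.2.1.2 : K)) ∧
      (∀ x y : S17, (reesMulM gMul P17 x y).2.1.2 = x.2.1.2 * y.2.1.2) ∧
      Function.Injective (fun u : U17 => ((u.1, u.2.1.1, u.2.2) : S17)) ∧
      (∀ u v : U17,
        ((reesMulM nMul PN u v).1, (reesMulM nMul PN u v).2.1.1,
          (reesMulM nMul PN u v).2.2) =
        reesMulM gMul P17 (u.1, u.2.1.1, u.2.2) (v.1, v.2.1.1, v.2.2)) ∧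
      Set.range (fun u : U17 => ((u.1, u.2.1.1, u.2.2) : S17)) =
        {x : S17 | x.2.1.2 = 1}) ∧
    ¬ ∃ ψ : S17 → (K → U17) × K, Function.Injective ψ ∧
        ∀ x y : S17, ψ (reesMulM gMul P17 x y) =
          ((fun C => reesMulM nMul PN ((ψ x).1 C) ((ψ y).1 (C * (ψ x).2))),
            (ψ x).2 * (ψ y).2) := ⟨⟨simpleS, se0, primS⟩, part2, no_embed⟩
end
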